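/- Let φ_ρ(u,v) = uv + (ρ/2)u² if ρu + v ≥ 0, and φ_ρ(u,v) = -v²/(2ρ) otherwise, where ρ > 0. Then for every fixed u ∈ ℝ, the function v ↦ φ_ρ(u,v) is concave on ℝ. -/
import Mathlib


theorem phi_concave_in_v (ρ : ℝ) (hρ : 0 < ρ) (u : ℝ) :
    ConcaveOn ℝ Set.univ
      (fun v : ℝ => if ρ * u + v ≥ 0 then u * v + ρ / 2 * u ^ 2 else -(v ^ 2 / (2 * ρ))) := by
  constructor
  · exact convex_univ
  · intro x _ y _ a b ha hb hab
    have hb1 : b = 1 - a := by linarith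
    subst hb1
    have ha1 : a ≤ 1 := by linarith
    simp only [smul_eq_mul]
    have hρ' : ρ ≠ 0 := ne_of_gt hρ
    split_ifs with h1 h2 h3 h4 h5 h6 h7
    · -- TTT
      exact le_of_eq (by ring)
    · -- TTF : contradiction
      exfalso
      push_neg at h3
      nlinarith [mul_nonneg ha h1, mul_nonneg hb h2]
    · -- TFT
      rw [← sub_nonneg]
      have h : u * (a * x + (1 - a) * y) + ρ / 2 * u ^ 2 -
          (a * (u * x + ρ / 2 * u ^ 2) + (1 - a) * -(y ^ 2 / (2 * ρ))) =
          ((1 - a) * (ρ * u + y) ^ 2) / (2 * ρ) := by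
        field_simp; ring
      rw [h]
      exact div_nonneg (mul_nonneg hb (sq_nonneg _)) (by linarith)
    · -- TFF
      push_neg at h4
      rw [← sub_nonneg]
      have h : -((a * x + (1 - a) * y) ^ 2 / (2 * ρ)) -
          (a * (u * x + ρ / 2 * u ^ 2) + (1 - a) * -(y ^ 2 / (2 * ρ))) =
          ((1 - a) * (ρ * u + y) ^ 2 - (ρ * u + (a * x + (1 - a) * y)) ^ 2) / (2 * ρ) := by
        field_simp; ring
      rw [h]
      apply div_nonneg _ (by linarith)
      have hZY : (1 - a) * (ρ * u + y) ≤ ρ * u + (a * x + (1 - a) * y) := by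
        nlinarith [mul_nonneg ha h1]
      nlinarith [hZY, h4, mul_nonneg hb (sq_nonneg (ρ * u + y)), sq_nonneg (ρ * u + y),
        mul_nonneg ha hb]
    · -- FTT
      rw [← sub_nonneg]
      have h : u * (a * x + (1 - a) * y) + ρ / 2 * u ^ 2 -
          (a * -(x ^ 2 / (2 * ρ)) + (1 - a) * (u * y + ρ / 2 * u ^ 2)) =
          (a * (ρ * u + x) ^ 2) / (2 * ρ) := by
        field_simp; ring
      rw [h]
      exact div_nonneg (mul_nonneg ha (sq_nonneg _)) (by linarith)
    · -- FTF
      push_neg at h6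
      rw [← sub_nonneg]
      have h : -((a * x + (1 - a) * y) ^ 2 / (2 * ρ)) -
          (a * -(x ^ 2 / (2 * ρ)) + (1 - a) * (u * y + ρ / 2 * u ^ 2)) =
          (a * (ρ * u + x) ^ 2 - (ρ * u + (a * x + (1 - a) * y)) ^ 2) / (2 * ρ) := by
        field_simp; ring
      rw [h]
      apply div_nonneg _ (by linarith)
      have hZX : a * (ρ * u + x) ≤ ρ * u + (a * x + (1 - a) * y) := by
        nlinarith [mul_nonneg hb h5]
      nlinarith [hZX, h6, mul_nonneg ha (sq_nonneg (ρ * u + x)), sq_nonneg (ρ * u + x),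
        mul_nonneg ha hb]
    · -- FFT
      rw [← sub_nonneg]
      have h : u * (a * x + (1 - a) * y) + ρ / 2 * u ^ 2 -
          (a * -(x ^ 2 / (2 * ρ)) + (1 - a) * -(y ^ 2 / (2 * ρ))) =
          (a * (ρ * u + x) ^ 2 + (1 - a) * (ρ * u + y) ^ 2) / (2 * ρ) := by
        field_simp; ring
      rw [h]
      exact div_nonneg (add_nonneg (mul_nonneg ha (sq_nonneg _)) (mul_nonneg hb (sq_nonneg _))) (by linarith)
    · -- FFF
      rw [← sub_nonneg]
      have h : -((a * x + (1 - a) * y) ^ 2 / (2 * ρ)) -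
          (a * -(x ^ 2 / (2 * ρ)) + (1 - a) * -(y ^ 2 / (2 * ρ))) =
          (a * (1 - a) * (x - y) ^ 2) / (2 * ρ) := by
        field_simp; ring
      rw [h]
      exact div_nonneg (mul_nonneg (mul_nonneg ha hb) (sq_nonneg _)) (by linarith)
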